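/- Let A be an n×n upper-triangular complex matrix such that every diagonal entry of A has the form (1 + iθ)·t for some real numbers θ and t (possibly depending on the entry). Then −1 is not an eigenvalue of the matrix exponential exp(A); equivalently, −1 does not belong to the spectrum of exp(A). -/

import Mathlib

open NormedSpace Matrix

attribute [local instance] Matrix.linftyOpNormedRing Matrix.linftyOpNormedAlgebra

-- diagonal of product of block triangular matrices
lemma diag_mul {n : ℕ} {M N : Matrix (Fin n) (Fin n) ℂ}
    (hM : M.BlockTriangular id) (hN : N.BlockTriangular id) (i : Fin n) :
    (M * N) i i = M i i * N i i := by
  rw [Matrix.mul_apply]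
  refine Finset.sum_eq_single i (fun k _ hk => ?_) (by simp)
  rcases lt_or_gt_of_ne hk with h | h
  · rw [hM h, zero_mul]
  · rw [hN h, mul_zero]

lemma pow_tri {n : ℕ} {A : Matrix (Fin n) (Fin n) ℂ} (hA : A.BlockTriangular id) (m : ℕ) :
    (A ^ m).BlockTriangular id ∧ ∀ i, (A ^ m) i i = (A i i) ^ m := by
  induction m with
  | zero => simpa using Matrix.blockTriangular_one
  | succ m ih =>
    refine ⟨by rw [pow_succ]; exact ih.1.mul hA, fun i => ?_⟩
    rw [pow_succ, diag_mul ih.1 hA, ih.2, pow_succ]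

lemma exp_entry {n : ℕ} (A : Matrix (Fin n) (Fin n) ℂ) (i j : Fin n) :
    NormedSpace.exp A i j = ∑' m : ℕ, ((m.factorial : ℂ)⁻¹ • A ^ m) i j := by
  rw [NormedSpace.exp_eq_tsum ℂ]
  have hs : Summable (fun m : ℕ => ((m.factorial : ℂ)⁻¹ • A ^ m)) :=
    NormedSpace.expSeries_summable' (𝕂 := ℂ) A
  have hc : Continuous (Matrix.entryLinearMap ℂ ℂ i j) :=
    LinearMap.continuous_of_finiteDimensional _
  exact (hs.hasSum.map (Matrix.entryLinearMap ℂ ℂ i j) hc).tsum_eq.symm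

lemma exp_tri {n : ℕ} {A : Matrix (Fin n) (Fin n) ℂ} (hA : A.BlockTriangular id) :
    (NormedSpace.exp A).BlockTriangular id ∧
      ∀ i, (NormedSpace.exp A) i i = Complex.exp (A i i) := by
  constructor
  · intro i j hij
    rw [exp_entry]
    simp only [Matrix.smul_apply]
    have : ∀ m : ℕ, ((m.factorial:ℂ)⁻¹ • (A ^ m) i j) = 0 := fun m => by
      rw [(pow_tri hA m).1 hij, smul_zero]
    simp only [this]
    exact tsum_zero
  · intro i
    rw [exp_entry]
    have : ∀ m : ℕ, ((m.factorial : ℂ)⁻¹ • A ^ m) i i = (m.factorial:ℂ)⁻¹ • (A i i) ^ m :=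
      fun m => by rw [Matrix.smul_apply, (pow_tri hA m).2 i]
    rw [tsum_congr this, Complex.exp_eq_exp_ℂ, NormedSpace.exp_eq_tsum ℂ]

lemma key_ne {θ t : ℝ} : Complex.exp ((1 + (θ:ℂ)*Complex.I) * t) + 1 ≠ 0 := by
  intro h
  have he : Complex.exp ((1 + (θ:ℂ)*Complex.I) * t) = -1 := by linear_combination h
  have habs := congrArg (‖·‖) he
  rw [Complex.norm_exp, norm_neg, norm_one] at habs
  have hre : ((1 + (θ:ℂ)*Complex.I) * t).re = t := by simp
  rw [hre] at habs
  have ht : t = 0 := by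
    have : Real.exp t = Real.exp 0 := by rw [habs, Real.exp_zero]
    exact Real.exp_injective this
  rw [ht] at he
  simp at he
  -- he : Complex.exp 0 = -1
  norm_num at he

theorem stmt_15 {n : ℕ} (A : Matrix (Fin n) (Fin n) ℂ)
    (htri : ∀ i j : Fin n, j < i → A i j = 0)
    (hdiag : ∀ i : Fin n, ∃ θ t : ℝ, A i i = (1 + (θ : ℂ) * Complex.I) * (t : ℂ)) :
    (NormedSpace.exp A - (-1 : ℂ) • (1 : Matrix (Fin n) (Fin n) ℂ)).det ≠ 0 ∧
      (-1 : ℂ) ∉ spectrum ℂ (NormedSpace.exp A) := by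
  have hA : A.BlockTriangular id := fun i j h => htri i j h
  obtain ⟨hE, hEd⟩ := exp_tri hA
  have hM : (NormedSpace.exp A - (-1:ℂ) • (1 : Matrix (Fin n) (Fin n) ℂ)).BlockTriangular id :=
    hE.sub (fun i j h => by simp [Matrix.one_apply_ne' (id (ne_of_lt h) : j ≠ i)])
  have hdet : (NormedSpace.exp A - (-1:ℂ) • (1 : Matrix (Fin n) (Fin n) ℂ)).det ≠ 0 := by
    rw [Matrix.det_of_upperTriangular hM]
    refine Finset.prod_ne_zero_iff.mpr fun i _ => ?_
    obtain ⟨θ, t, h⟩ := hdiag i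
    simp only [Matrix.sub_apply, Matrix.smul_apply, Matrix.one_apply_eq, hEd i, h]
    simpa [sub_eq_add_neg] using key_ne (θ := θ) (t := t)
  refine ⟨hdet, fun hspec => ?_⟩
  rw [spectrum.mem_iff] at hspec
  apply hspec
  rw [Matrix.isUnit_iff_isUnit_det]
  have : ((algebraMap ℂ (Matrix (Fin n) (Fin n) ℂ)) (-1) - NormedSpace.exp A).det ≠ 0 := by
    have hneg : (algebraMap ℂ (Matrix (Fin n) (Fin n) ℂ)) (-1) - NormedSpace.exp A
        = -(NormedSpace.exp A - (-1:ℂ) • (1 : Matrix (Fin n) (Fin n) ℂ)) := by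
      rw [Algebra.algebraMap_eq_smul_one]; abel
    rw [hneg, Matrix.det_neg]
    exact mul_ne_zero (pow_ne_zero _ (by norm_num)) hdet
  exact isUnit_iff_ne_zero.mpr this
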